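/- arXiv:1303.1863 — 3 statements merged into one kernel-verified Lean document; each statement's English description precedes it below -/
import Mathlib

section
/- Let $m > 0$, $\lambda > 0$, and $s > 2m$. Set $b(s) = 1 - \frac{2m}{s}$, $f(s) = \sqrt{1 - \frac{2m}{s} + \lambda^2 s^2}$, and $\rho'(s) = \frac{\lambda s}{b(s) f(s)}$. Then $\frac{b(s)\rho'(s)}{\sqrt{b(s)^{-1} - b(s)\rho'(s)^2}} = \lambda s$; consequently the quantities $p_{11} = \frac{d}{ds}\Big(\frac{b\rho'}{\sqrt{b^{-1} - b(\rho')^2}}\Big)$ and $p_{22} = p_{33} = \frac{1}{s}\cdot\frac{b\rho'}{\sqrt{b^{-1} - b(\rho')^2}}$ all equal $\lambda$. -/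
/-- with `b(s) = 1 - 2m/s`, `f(s) = √(1 - 2m/s + λ²s²)` and
`ρ'(s) = λs/(b(s)f(s))`, the quantity `F(s) = bρ'/√(b⁻¹ - b(ρ')²)` equals
`λs` for `s > 2m`; consequently `p₁₁ = F'(s) = λ` and
`p₂₂ = p₃₃ = F(s)/s = λ`, i.e. the slice is totally umbilical. -/
theorem umbilical_slice_second_fundamental_form (m lam : ℝ)
    (hm : 0 < m) (hlam : 0 < lam)
    (b f r F : ℝ → ℝ)
    (hb : ∀ s, b s = 1 - 2 * m / s)
    (hf : ∀ s, f s = Real.sqrt (1 - 2 * m / s + lam ^ 2 * s ^ 2))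
    (hr : ∀ s, r s = lam * s / (b s * f s))
    (hF : ∀ s, F s = b s * r s / Real.sqrt ((b s)⁻¹ - b s * (r s) ^ 2)) :
    ∀ s, 2 * m < s →
      F s = lam * s ∧ HasDerivAt F lam s ∧ (1 / s) * F s = lam := by
  -- main value computation
  have key : ∀ s, 2 * m < s → F s = lam * s := by
    intro s hs
    have hspos : (0:ℝ) < s := lt_trans (by linarith) hs
    have hbpos : 0 < b s := by
      rw [hb]
      have : 2 * m / s < 1 := by rw [div_lt_one hspos]; linarith
      linarith
    have harg : 0 < 1 - 2 * m / s + lam ^ 2 * s ^ 2 := by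
      have h1 : 0 < lam ^ 2 * s ^ 2 := by positivity
      have := hbpos; rw [hb] at this; linarith
    have hfpos : 0 < f s := by rw [hf]; exact Real.sqrt_pos.mpr harg
    have hfsq : f s ^ 2 = b s + lam ^ 2 * s ^ 2 := by
      rw [hf, Real.sq_sqrt harg.le, hb]
    have hbr : b s * r s = lam * s / f s := by
      rw [hr]; field_simp
    have hinner : (b s)⁻¹ - b s * (r s) ^ 2 = (1 / f s) ^ 2 := by
      rw [hr]
      field_simp
      nlinarith [hfsq]
    have hsqrt : Real.sqrt ((b s)⁻¹ - b s * (r s) ^ 2) = 1 / f s := by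
      rw [hinner, Real.sqrt_sq (by positivity)]
    rw [hF, hbr, hsqrt]
    field_simp
  intro s hs
  have hspos : (0:ℝ) < s := lt_trans (by linarith) hs
  refine ⟨key s hs, ?_, ?_⟩
  · have hderiv : HasDerivAt (fun x => lam * x) lam s := by
      simpa using (hasDerivAt_id s).const_mul lam
    refine hderiv.congr_of_eventuallyEq ?_
    filter_upwards [eventually_gt_nhds hs] with x hx
    exact key x hx
  · rw [key s hs]; field_simp
end

section
/- Let $m > 0$. For $\lambda > 0$ define $\rho_\lambda(s) = 4m + \int_{4m}^{s} \frac{\lambda u}{(1 - \frac{2m}{u})\sqrt{1 - \frac{2m}{u} + \lambda^2 u^2}}\, du$ for $s \in (2m, \infty)$. Then for every fixed $s \in (2m, \infty)$, $\rho_\lambda(s) \to s + 2m\log\big(\frac{s}{2m} - 1\big)$ as $\lambda \to \infty$. -/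
open intervalIntegral in
/-- the umbilical slices converge to the null hypersurface:
for each fixed `s > 2m`, the solution
`ρ_λ(s) = 4m + ∫_{4m}^{s} λu/((1-2m/u)√(1-2m/u+λ²u²)) du`
converges to `s + 2m log(s/(2m) - 1)` as `λ → ∞`. -/
theorem umbilical_slices_converge_to_null (m : ℝ) (hm : 0 < m)
    (s : ℝ) (hs : 2 * m < s)
    (ρ : ℝ → ℝ → ℝ)
    (hρ : ∀ lam t, ρ lam t = 4 * m + ∫ u in (4 * m)..t,
      lam * u / ((1 - 2 * m / u) * Real.sqrt (1 - 2 * m / u + lam ^ 2 * u ^ 2))) :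
    Filter.Tendsto (fun lam => ρ lam s) Filter.atTop
      (nhds (s + 2 * m * Real.log (s / (2 * m) - 1))) := by
  have h2m : (0:ℝ) < 2 * m := by linarith
  set c : ℝ := min (4 * m) s with hcdef
  have hc2 : 2 * m < c := lt_min (by linarith) hs
  have hc0 : 0 < c := h2m.trans hc2
  -- facts on the interval
  have hmem : ∀ u ∈ Set.uIcc (4 * m) s, 2 * m < u ∧ c ≤ u := by
    intro u hu
    rw [Set.uIcc_eq_union] at hu
    have : c ≤ u := by
      rcases hu with h | h
      · exact le_trans (min_le_left _ _) h.1
      · exact le_trans (min_le_right _ _) h.1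
    exact ⟨lt_of_lt_of_le hc2 this, this⟩
  -- facts derived for each u in interval
  have key : ∀ u, 2 * m < u →
      0 < u ∧ 0 < 1 - 2 * m / u := by
    intro u hu
    have hu0 : 0 < u := h2m.trans hu
    constructor
    · exact hu0
    · have : 2 * m / u < 1 := (div_lt_one hu0).mpr hu
      linarith
  set G : ℝ → ℝ := fun u => 1 / (1 - 2 * m / u) with hG
  set F : ℝ → ℝ → ℝ := fun lam u =>
    lam * u / ((1 - 2 * m / u) * Real.sqrt (1 - 2 * m / u + lam ^ 2 * u ^ 2)) with hF
  -- integral of G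
  have hGcont : ContinuousOn G (Set.uIcc (4 * m) s) := by
    apply ContinuousOn.div continuousOn_const
    · apply ContinuousOn.sub continuousOn_const
      apply ContinuousOn.div continuousOn_const continuousOn_id
      intro u hu; exact ((key u (hmem u hu).1).1).ne'
    · intro u hu; exact ((key u (hmem u hu).1).2).ne'
  have hGint : IntervalIntegrable G MeasureTheory.volume (4 * m) s :=
    hGcont.intervalIntegrable
  have hGval : (∫ u in (4 * m)..s, G u)
      = s - 4 * m + 2 * m * Real.log ((s - 2 * m) / (2 * m)) := by
    have hderiv : ∀ u ∈ Set.uIcc (4 * m) s,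
        HasDerivAt (fun u => u + 2 * m * Real.log (u - 2 * m)) (G u) u := by
      intro u hu
      have hu2 := (hmem u hu).1
      have hu0 : 0 < u := h2m.trans hu2
      have h1 : HasDerivAt (fun u : ℝ => u - 2 * m) 1 u := by
        simpa using (hasDerivAt_id u).sub_const (2 * m)
      have h2 : HasDerivAt (fun u : ℝ => Real.log (u - 2 * m)) (1 / (u - 2 * m)) u := by
        simpa using (h1.log (by linarith))
      have h3 : HasDerivAt (fun u : ℝ => u + 2 * m * Real.log (u - 2 * m))
          (1 + 2 * m * (1 / (u - 2 * m))) u := (hasDerivAt_id u).add (h2.const_mul (2 * m))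
      convert h3 using 1
      have hne : u - 2 * m ≠ 0 := by linarith
      field_simp [hG]
      have hGu : G u = 1 / (1 - 2 * m / u) := rfl
      have hu' : u ≠ 0 := hu0.ne'
      rw [hGu, show (1:ℝ) - 2 * m / u = (u - 2 * m) / u by field_simp, one_div_div, div_mul_cancel₀ _ hne]
      ring
    rw [intervalIntegral.integral_eq_sub_of_hasDerivAt hderiv hGint]
    have hs2 : (0:ℝ) < s - 2 * m := by linarith
    rw [Real.log_div (by linarith) (by linarith)]
    rw [show (4 * m - 2 * m) = 2 * m by ring]
    ring
  -- pointwise error bound for lam > 0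
  have hbound : ∀ lam : ℝ, 0 < lam → ∀ u ∈ Set.uIcc (4 * m) s,
      0 ≤ G u - F lam u ∧ G u - F lam u ≤ 1 / (lam ^ 2 * c ^ 2) := by
    intro lam hlam u hu
    obtain ⟨hu2, hcu⟩ := hmem u hu
    obtain ⟨hu0, hA⟩ := key u hu2
    set A : ℝ := 1 - 2 * m / u with hAdef
    set D : ℝ := A + lam ^ 2 * u ^ 2 with hDdef
    have hD0 : 0 < D := by positivity
    have hsq : Real.sqrt D * Real.sqrt D = D := Real.mul_self_sqrt hD0.le
    have hsD0 : 0 < Real.sqrt D := Real.sqrt_pos.mpr hD0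
    have hlu : lam * u ≤ Real.sqrt D := by
      rw [show lam * u = Real.sqrt ((lam * u) ^ 2) from
        (Real.sqrt_sq (by positivity)).symm]
      apply Real.sqrt_le_sqrt; nlinarith
    have hlu0 : 0 < lam * u := by positivity
    have heq : G u - F lam u = 1 / (Real.sqrt D * (Real.sqrt D + lam * u)) := by
      have h1 : G u = 1 / A := rfl
      have h2 : F lam u = lam * u / (A * Real.sqrt D) := rfl
      rw [h1, h2]
      have hne1 : A ≠ 0 := hA.ne'
      have hne2 : Real.sqrt D ≠ 0 := hsD0.ne'
      have hne3 : Real.sqrt D + lam * u ≠ 0 := by positivity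
      field_simp
      nlinarith [hsq]
    constructor
    · rw [heq]; positivity
    · rw [heq]
      apply one_div_le_one_div_of_le (by positivity)
      calc lam ^ 2 * c ^ 2 ≤ (lam * u) * (lam * u) := by nlinarith [mul_le_mul_of_nonneg_left (mul_le_mul hcu hcu hc0.le hu0.le) (sq_nonneg lam)]
        _ ≤ Real.sqrt D * Real.sqrt D := mul_le_mul hlu hlu hlu0.le hsD0.le
        _ ≤ Real.sqrt D * (Real.sqrt D + lam * u) := by nlinarith
  -- integrability of F lam for lam > 0
  have hFint : ∀ lam : ℝ, 0 < lam →
      IntervalIntegrable (F lam) MeasureTheory.volume (4 * m) s := by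
    intro lam hlam
    apply ContinuousOn.intervalIntegrable
    apply ContinuousOn.div (by fun_prop)
    · apply ContinuousOn.mul
      · apply ContinuousOn.sub continuousOn_const
        apply ContinuousOn.div continuousOn_const continuousOn_id
        intro u hu; exact ((key u (hmem u hu).1).1).ne'
      · apply ContinuousOn.sqrt
        apply ContinuousOn.add
        · apply ContinuousOn.sub continuousOn_const
          apply ContinuousOn.div continuousOn_const continuousOn_id
          intro u hu; exact ((key u (hmem u hu).1).1).ne'
        · fun_prop
    · intro u hu
      obtain ⟨hu2, hcu⟩ := hmem u hu
      obtain ⟨hu0, hA⟩ := key u hu2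
      have hD0 : 0 < 1 - 2 * m / u + lam ^ 2 * u ^ 2 := by positivity
      have := Real.sqrt_pos.mpr hD0
      positivity
  -- the error integral tends to 0
  have herr : Filter.Tendsto
      (fun lam => (∫ u in (4 * m)..s, G u) - ∫ u in (4 * m)..s, F lam u)
      Filter.atTop (nhds 0) := by
    apply squeeze_zero_norm' (a := fun lam => 1 / (lam ^ 2 * c ^ 2) * |s - 4 * m|)
    · filter_upwards [Filter.eventually_gt_atTop 0] with lam hlam
      rw [← intervalIntegral.integral_sub hGint (hFint lam hlam)]
      apply intervalIntegral.norm_integral_le_of_norm_le_const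
      intro u hu
      have hu' : u ∈ Set.uIcc (4 * m) s := Set.uIoc_subset_uIcc hu
      obtain ⟨h1, h2⟩ := hbound lam hlam u hu'
      rw [Real.norm_eq_abs, abs_of_nonneg h1]
      exact h2
    · have h1 : Filter.Tendsto (fun lam : ℝ => lam ^ 2 * c ^ 2) Filter.atTop Filter.atTop := by
        apply Filter.Tendsto.atTop_mul_const (by positivity)
        exact Filter.tendsto_pow_atTop (by norm_num)
      have h3 := h1.inv_tendsto_atTop.mul_const |s - 4 * m|
      simp only [Pi.inv_apply, zero_mul] at h3
      simp only [one_div]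
      exact h3
  -- conclude
  have hmain : Filter.Tendsto (fun lam => ∫ u in (4 * m)..s, F lam u)
      Filter.atTop (nhds (∫ u in (4 * m)..s, G u)) := by
    have := (herr.const_sub (∫ u in (4 * m)..s, G u))
    simpa using this
  have hfinal := hmain.const_add (4 * m)
  have heqfun : (fun lam => ρ lam s) = fun lam => 4 * m + ∫ u in (4 * m)..s, F lam u := by
    funext lam; rw [hρ lam s]
  rw [heqfun]
  convert hfinal using 2
  rw [hGval]
  have : s / (2 * m) - 1 = (s - 2 * m) / (2 * m) := by field_simp
  rw [this]; ring
end

section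
/- Let $G$ be a symmetric positive definite $n \times n$ real matrix, let $w \in \mathbb{R}^n$, let $c > 0$, and set $\hat{G} = G + c\, w w^T$. Let $h$ be a symmetric $n \times n$ real matrix and $\kappa \in \mathbb{R}$ such that $h - \kappa \hat{G}$ is positive semidefinite. Then $\operatorname{tr}(G^{-1} h) - c\,\kappa\, w^T G^{-1} w \;\geq\; \operatorname{tr}(\hat{G}^{-1} h)$. -/
open Matrix

private lemma vecMulVec_mul' {n : ℕ} (a b : Fin n → ℝ) (M : Matrix (Fin n) (Fin n) ℝ) :
    vecMulVec a b * M = vecMulVec a (b ᵥ* M) := by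
  ext i j
  simp [mul_apply, vecMulVec_apply, vecMul, dotProduct, Finset.mul_sum, mul_assoc]

private lemma mul_vecMulVec' {n : ℕ} (a b : Fin n → ℝ) (M : Matrix (Fin n) (Fin n) ℝ) :
    M * vecMulVec a b = vecMulVec (M *ᵥ a) b := by
  ext i j
  simp [mul_apply, vecMulVec_apply, mulVec, dotProduct, Finset.sum_mul, mul_assoc]

private lemma trace_vecMulVec_mul' {n : ℕ} (v : Fin n → ℝ) (h : Matrix (Fin n) (Fin n) ℝ) :
    (vecMulVec v v * h).trace = v ⬝ᵥ (h *ᵥ v) := by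
  simp [trace, diag, mul_apply, vecMulVec_apply, mulVec, dotProduct, Finset.mul_sum]
  rw [Finset.sum_comm]
  congr 1; ext i; congr 1; ext j; ring

private lemma vecMul_vecMulVec' {n : ℕ} (a b u : Fin n → ℝ) :
    b ᵥ* vecMulVec a u = (b ⬝ᵥ a) • u := by
  ext j; simp [vecMul, vecMulVec_apply, dotProduct, Finset.sum_mul, mul_assoc]

private lemma vecMulVec_smul_right' {n : ℕ} (a u : Fin n → ℝ) (r : ℝ) :
    vecMulVec a (r • u) = r • vecMulVec a u := by
  ext i j; simp [vecMulVec_apply]; ring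

private lemma vecMulVec_mulVec' {n : ℕ} (a b u : Fin n → ℝ) :
    vecMulVec a b *ᵥ u = (b ⬝ᵥ u) • a := by
  ext i; simp [mulVec, vecMulVec_apply, dotProduct, Finset.sum_mul]
  exact Finset.sum_congr rfl fun j _ => by ring

/-- the key pointwise mean curvature comparison: if
`Ghat = G + c w wᵀ` with `G` symmetric positive definite and `c > 0`, and if
`h - κ Ghat` is positive semidefinite for a symmetric matrix `h`, then
`tr(G⁻¹h) - c κ wᵀG⁻¹w ≥ tr(Ghat⁻¹h)`. -/
theorem mean_curvature_comparison {n : ℕ}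
    (G : Matrix (Fin n) (Fin n) ℝ) (hG : G.PosDef)
    (w : Fin n → ℝ) (c : ℝ) (hc : 0 < c)
    (h : Matrix (Fin n) (Fin n) ℝ) (hh : h.IsSymm) (κ : ℝ)
    (hpsd : (h - κ • (G + c • Matrix.vecMulVec w w)).PosSemidef) :
    (G⁻¹ * h).trace - c * κ * (w ⬝ᵥ (G⁻¹ *ᵥ w)) ≥
      ((G + c • Matrix.vecMulVec w w)⁻¹ * h).trace := by
  set Gi := G⁻¹ with hGi
  set v : Fin n → ℝ := Gi *ᵥ w with hv
  set d : ℝ := w ⬝ᵥ v with hd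
  have hdet : IsUnit G.det := isUnit_iff_ne_zero.mpr (ne_of_gt hG.det_pos)
  have hGGi : G * Gi = 1 := G.mul_nonsing_inv hdet
  have hGiSymm : Giᵀ = Gi := by
    have := hG.isHermitian.inv
    simpa [Matrix.IsHermitian, conjTranspose, star] using this
  -- d ≥ 0
  have hGiPSD : Gi.PosSemidef := hG.inv.posSemidef
  have hd0 : 0 ≤ d := by
    have := hGiPSD.dotProduct_mulVec_nonneg w
    simpa [hd, hv] using this
  -- G *ᵥ v = w
  have hGv : G *ᵥ v = w := by
    rw [hv, Matrix.mulVec_mulVec, hGGi, Matrix.one_mulVec]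
  have hvw : v ⬝ᵥ w = d := by rw [hd]; exact dotProduct_comm v w
  -- Sherman–Morrison
  have hden : (0:ℝ) < 1 + c * d := by positivity
  set s : ℝ := c / (1 + c * d) with hs
  have hs0 : 0 < s := div_pos hc hden
  set Ghat : Matrix (Fin n) (Fin n) ℝ := G + c • vecMulVec w w with hGhat
  have hwGi : w ᵥ* Gi = v := by
    rw [hv, ← Matrix.mulVec_transpose, hGiSymm]
  have hSM : Ghat * (Gi - s • vecMulVec v v) = 1 := by
    rw [hGhat]
    rw [Matrix.add_mul, Matrix.mul_sub, Matrix.mul_sub, Matrix.smul_mul, Matrix.smul_mul,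
      hGGi, Matrix.mul_smul, Matrix.mul_smul, mul_vecMulVec', hGv,
      vecMulVec_mul', hwGi, vecMulVec_mul', vecMul_vecMulVec', ← hd,
      vecMulVec_smul_right']
    have hcoef0 : -s + (c - c * (s * d)) = 0 := by
      have : c - s * (1 + c * d) = 0 := by rw [hs]; field_simp; ring
      linarith [this]
    have key : 1 - s • vecMulVec w v + (c • vecMulVec w v - c • s • d • vecMulVec w v)
        = 1 + (-s + (c - c * (s * d))) • vecMulVec w v := by
      rw [smul_smul, smul_smul, add_smul, neg_smul, sub_smul]
      module
    rw [key, hcoef0, zero_smul, add_zero]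
  have hGhatinv : Ghat⁻¹ = Gi - s • vecMulVec v v := inv_eq_right_inv hSM
  -- traces
  have htrace : (Ghat⁻¹ * h).trace = (Gi * h).trace - s * (v ⬝ᵥ (h *ᵥ v)) := by
    rw [hGhatinv, Matrix.sub_mul, trace_sub, Matrix.smul_mul, trace_smul,
      trace_vecMulVec_mul', smul_eq_mul]
  -- PSD at v
  have hQ : v ⬝ᵥ (h *ᵥ v) ≥ κ * (d * (1 + c * d)) := by
    have h2 := hpsd.dotProduct_mulVec_nonneg v
    have : 0 ≤ v ⬝ᵥ ((h - κ • Ghat) *ᵥ v) := by simpa using h2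
    rw [Matrix.sub_mulVec, dotProduct_sub, Matrix.smul_mulVec, dotProduct_smul,
      hGhat, Matrix.add_mulVec, Matrix.smul_mulVec, hGv, dotProduct_add,
      dotProduct_smul, vecMulVec_mulVec', dotProduct_smul, hvw] at this
    have hwv : w ⬝ᵥ v = d := hd.symm
    rw [hwv] at this
    have : κ * (d + c * (d * d)) ≤ v ⬝ᵥ (h *ᵥ v) := by
      simpa [smul_eq_mul] using sub_nonneg.mp this
    calc κ * (d * (1 + c * d)) = κ * (d + c * (d * d)) := by ring
      _ ≤ v ⬝ᵥ (h *ᵥ v) := this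
  -- conclude
  rw [ge_iff_le]
  calc (Ghat⁻¹ * h).trace = (Gi * h).trace - s * (v ⬝ᵥ (h *ᵥ v)) := htrace
    _ ≤ (Gi * h).trace - s * (κ * (d * (1 + c * d))) := by
        have := mul_le_mul_of_nonneg_left hQ (le_of_lt hs0)
        linarith
    _ = (Gi * h).trace - c * κ * d := by
        rw [hs]; field_simp
end
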